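/- Let F be a field, n ≥ 1, and let I be a nonzero monomial ideal of F[X_1,...,X_n] such that the quotient F[X_1,...,X_n]/I has finite dimension K ≥ 1 over F. Let G be the minimal monomial generating set of I, i.e., the set of exponent vectors a ∈ ℕⁿ such that the monomial X^a lies in I but X^a/X_i ∉ I for every index i with a_i > 0. Then |G| = (n−1)K + 1 if and only if K = 1 or n = 1. -/

import Mathlib

namespace Statement7Aux

variable {n : ℕ}

abbrev Mu (n : ℕ) := Fin n →₀ ℕ

lemma sub_add_single (a : Mu n) (i : Fin n) (h : 0 < a i) :
    a - Finsupp.single i 1 + Finsupp.single i 1 = a := by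
  ext j
  rcases eq_or_ne i j with rfl | hij
  · rw [Finsupp.add_apply, Finsupp.tsub_apply, Finsupp.single_apply, if_pos rfl]
    omega
  · simp [Finsupp.add_apply, Finsupp.tsub_apply, Finsupp.single_apply, hij]

lemma sub_single_ne (a : Mu n) (i : Fin n) (h : 0 < a i) :
    a - Finsupp.single i 1 ≠ a := by
  intro he
  have h2 : ((a - Finsupp.single i 1 : Mu n)) i = a i := by rw [he]
  rw [Finsupp.tsub_apply, Finsupp.single_apply, if_pos rfl] at h2
  omega

/-- the minimal generators of the monomial ideal complementary to `S`. -/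
def gens (S : Finset (Mu n)) : Set (Mu n) :=
  {a | a ∉ S ∧ ∀ i, 0 < a i → a - Finsupp.single i 1 ∈ S}

def DC (S : Finset (Mu n)) : Prop := ∀ ⦃a b : Mu n⦄, a ≤ b → b ∈ S → a ∈ S

lemma exists_pos_of_ne_zero {a : Mu n} (h : a ≠ 0) : ∃ i, 0 < a i := by
  obtain ⟨i, hi⟩ := Finsupp.ne_iff.1 h
  exact ⟨i, Nat.pos_of_ne_zero hi⟩

lemma gens_finite (S : Finset (Mu n)) : (gens S).Finite := by
  apply Set.Finite.subset
    (s := {(0 : Mu n)} ∪ ⋃ s ∈ (S : Set (Mu n)), ⋃ i : Fin n, {s + Finsupp.single i 1})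
  · exact (Set.finite_singleton _).union
      (S.finite_toSet.biUnion fun s _ => Set.finite_iUnion fun i => Set.finite_singleton _)
  · rintro a ⟨haS, hgen⟩
    rcases eq_or_ne a 0 with rfl | h0
    · exact Or.inl rfl
    · obtain ⟨i, hi⟩ := exists_pos_of_ne_zero h0
      refine Or.inr ?_
      refine Set.mem_biUnion (hgen i hi) ?_
      exact Set.mem_iUnion.2 ⟨i, by simp [sub_add_single a i hi]⟩

lemma gens_zero : gens ({0} : Finset (Mu n)) = Set.range (fun i : Fin n => Finsupp.single i 1) := by
  ext a
  constructor
  · rintro ⟨haS, hgen⟩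
    have h0 : a ≠ 0 := by simpa using haS
    obtain ⟨i, hi⟩ := exists_pos_of_ne_zero h0
    have := hgen i hi
    simp only [Finset.mem_singleton] at this
    exact ⟨i, by rw [← sub_add_single a i hi, this, zero_add]⟩
  · rintro ⟨i, rfl⟩
    refine ⟨by simp [Finsupp.single_eq_zero], fun j hj => ?_⟩
    have hji : j = i := by
      by_contra hne
      simp [Finsupp.single_apply, Ne.symm hne] at hj
    subst hji
    simp

lemma ncard_gens_zero (hn : 1 ≤ n) : (gens ({0} : Finset (Mu n))).ncard = n := by
  rw [gens_zero, ← Set.image_univ,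
    Set.ncard_image_of_injective _ (Finsupp.single_left_injective one_ne_zero)]
  simp [Set.ncard_univ]



variable {S : Finset (Mu n)} {m : Mu n}

lemma DC.erase (hdc : DC S) (hmax : ∀ s ∈ S, m ≤ s → s = m) : DC (S.erase m) := by
  intro a b hab hb
  rw [Finset.mem_erase] at hb ⊢
  refine ⟨?_, hdc hab hb.2⟩
  rintro rfl
  exact hb.1 (hmax b hb.2 hab)

lemma mem_gens_erase (hdc : DC S) (hm : m ∈ S) (hm0 : m ≠ 0) : m ∈ gens (S.erase m) := by
  refine ⟨by simp, fun i hi => ?_⟩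
  rw [Finset.mem_erase]
  exact ⟨sub_single_ne m i hi, hdc tsub_le_self hm⟩

lemma gens_step (hm : m ∈ S) :
    gens S ⊆ (gens (S.erase m) \ {m}) ∪ Set.range (fun i : Fin n => m + Finsupp.single i 1) := by
  rintro a ⟨haS, hgen⟩
  by_cases hT : ∃ i, a = m + Finsupp.single i 1
  · exact Or.inr (by obtain ⟨i, rfl⟩ := hT; exact ⟨i, rfl⟩)
  · push_neg at hT
    refine Or.inl ⟨⟨?_, fun i hi => ?_⟩, ?_⟩
    · intro h; exact haS (Finset.mem_of_mem_erase h)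
    · rw [Finset.mem_erase]
      refine ⟨?_, hgen i hi⟩
      intro heq
      exact hT i (by rw [← sub_add_single a i hi, heq])
    · intro h
      rw [Set.mem_singleton_iff] at h
      exact haS (h ▸ hm)

lemma ncard_range_le (m : Mu n) :
    (Set.range (fun i : Fin n => m + Finsupp.single i 1)).ncard ≤ n := by
  rw [← Set.image_univ]
  calc ((fun i : Fin n => m + Finsupp.single i 1) '' Set.univ).ncard
      ≤ (Set.univ : Set (Fin n)).ncard := Set.ncard_image_le Set.finite_univ
    _ = n := by simp [Set.ncard_univ]

lemma ncard_step (hdc : DC S) (hm : m ∈ S) (hm0 : m ≠ 0) :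
    (gens S).ncard + 1 ≤ (gens (S.erase m)).ncard + n := by
  have hfin : ((gens (S.erase m) \ {m}) ∪
      Set.range (fun i : Fin n => m + Finsupp.single i 1)).Finite :=
    ((gens_finite _).diff).union (Set.finite_range _)
  have h1 := Set.ncard_le_ncard (gens_step hm) hfin
  have h2 := Set.ncard_union_le (gens (S.erase m) \ {m})
    (Set.range fun i : Fin n => m + Finsupp.single i 1)
  have h3 := ncard_range_le (n := n) m
  have h4 := Set.ncard_diff_singleton_add_one (mem_gens_erase hdc hm hm0) (gens_finite _)
  omega

def deg (a : Mu n) : ℕ := ∑ i, a i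

lemma deg_add (a b : Mu n) : deg (a + b) = deg a + deg b := by
  simp [deg, Finsupp.add_apply, Finset.sum_add_distrib]

lemma deg_single (i : Fin n) : deg (Finsupp.single i 1 : Mu n) = 1 := by
  simp [deg, Finsupp.single_apply]

lemma pos_deg_of_ne_zero {a : Mu n} (h : a ≠ 0) : 0 < deg a := by
  obtain ⟨i, hi⟩ := exists_pos_of_ne_zero h
  exact lt_of_lt_of_le hi (Finset.single_le_sum (fun _ _ => Nat.zero_le _) (Finset.mem_univ i))

lemma eq_of_le_of_deg_le {a b : Mu n} (hab : a ≤ b) (hd : deg b ≤ deg a) : a = b := by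
  ext i
  by_contra hne
  have hlt : a i < b i := lt_of_le_of_ne (Finsupp.le_def.1 hab i) hne
  have : deg a < deg b :=
    Finset.sum_lt_sum (fun j _ => Finsupp.le_def.1 hab j) ⟨i, Finset.mem_univ i, hlt⟩
  omega

lemma exists_maximal (hS : S.Nonempty) (s0 : Mu n) (hs0 : s0 ∈ S) (hs0ne : s0 ≠ 0) :
    ∃ m ∈ S, m ≠ 0 ∧ ∀ s ∈ S, m ≤ s → s = m := by
  obtain ⟨m, hm, hmax⟩ := S.exists_max_image deg hS
  refine ⟨m, hm, ?_, fun s hs hms => (eq_of_le_of_deg_le hms (hmax s hs)).symm⟩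
  rintro rfl
  have h1 := hmax s0 hs0
  have h2 := pos_deg_of_ne_zero hs0ne
  have h0 : deg (0 : Mu n) = 0 := by simp [deg]
  omega

lemma eq_singleton_zero (hdc : DC S) (hcard : S.card = 1) : S = {0} := by
  obtain ⟨s, hs⟩ := Finset.card_eq_one.1 hcard
  have hne : S.Nonempty := Finset.card_pos.1 (by omega)
  have h0 : (0 : Mu n) ∈ S := hdc zero_le hne.choose_spec
  rw [hs] at h0 ⊢
  simp only [Finset.mem_singleton] at h0
  rw [← h0]

lemma bound (hn : 1 ≤ n) : ∀ K, 1 ≤ K → ∀ S : Finset (Mu n), DC S → S.card = K →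
    (gens S).ncard + K ≤ n * K + 1 := by
  intro K
  induction K using Nat.strong_induction_on with
  | _ K ih =>
    intro hK S hdc hcard
    rcases eq_or_lt_of_le hK with h1 | h2
    · rw [eq_singleton_zero hdc (by omega), ncard_gens_zero hn]
      have : n * K = n := by rw [← h1, mul_one]
      omega
    · obtain ⟨a, ha, b, hb, hab⟩ := Finset.one_lt_card.1 (by omega : 1 < S.card)
      have hex : ∃ s0 ∈ S, s0 ≠ (0 : Mu n) := by
        rcases eq_or_ne a 0 with rfl | h
        · exact ⟨b, hb, fun h => hab h.symm⟩
        · exact ⟨a, ha, h⟩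
      obtain ⟨s0, hs0, hs0ne⟩ := hex
      obtain ⟨m, hm, hm0, hmax⟩ := exists_maximal ⟨a, ha⟩ s0 hs0 hs0ne
      have hstep := ncard_step hdc hm hm0
      have hcard2 : (S.erase m).card = K - 1 := by
        rw [Finset.card_erase_of_mem hm, hcard]
      have hih := ih (K - 1) (by omega) (by omega) (S.erase m) (hdc.erase hmax) hcard2
      have hmul : n * (K - 1) + n = n * K := by
        have h3 : K - 1 + 1 = K := by omega
        calc n * (K - 1) + n = n * (K - 1 + 1) := by ring
          _ = n * K := by rw [h3]
      omega

lemma card_two_struct (hdc : DC S) (hcard : S.card = 2) :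
    ∃ i : Fin n, S = {0, Finsupp.single i 1} := by
  have hne : S.Nonempty := Finset.card_pos.1 (by omega)
  have h0 : (0 : Mu n) ∈ S := hdc zero_le hne.choose_spec
  obtain ⟨a, b, hab, hS⟩ := Finset.card_eq_two.1 hcard
  have hex : ∃ s ∈ S, s ≠ (0 : Mu n) := by
    rw [hS] at h0
    simp only [Finset.mem_insert, Finset.mem_singleton] at h0
    rcases h0 with rfl | rfl
    · exact ⟨b, by rw [hS]; simp, fun h => hab h.symm⟩
    · exact ⟨a, by rw [hS]; simp, hab⟩
  obtain ⟨s, hs, hsne⟩ := hex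
  obtain ⟨i, hi⟩ := exists_pos_of_ne_zero hsne
  have hsub : s - Finsupp.single i 1 ∈ S := hdc tsub_le_self hs
  have hSeq : S = {0, s} := by
    have h1 : ({0, s} : Finset (Mu n)) ⊆ S := by
      intro x hx
      simp only [Finset.mem_insert, Finset.mem_singleton] at hx
      rcases hx with rfl | rfl
      · exact h0
      · exact hs
    refine (Finset.eq_of_subset_of_card_le h1 ?_).symm
    rw [hcard, Finset.card_insert_of_notMem (by simpa using hsne.symm)]
    simp
  have hsub2 : s - Finsupp.single i 1 = 0 := by
    rw [hSeq] at hsub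
    simp only [Finset.mem_insert, Finset.mem_singleton] at hsub
    rcases hsub with h | h
    · exact h
    · exact absurd h (sub_single_ne s i hi)
  refine ⟨i, ?_⟩
  have : s = Finsupp.single i 1 := by
    rw [← sub_add_single s i hi, hsub2, zero_add]
  rw [hSeq, this]

lemma single_add_sub_single (i j : Fin n) (hij : j ≠ i) :
    (Finsupp.single i 1 + Finsupp.single j 1 : Mu n) - Finsupp.single i 1 =
      Finsupp.single j 1 :=
  add_tsub_cancel_left _ _

lemma bound_two (hn : 2 ≤ n) (hdc : DC S) (hcard : S.card = 2) : (gens S).ncard ≤ n := by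
  obtain ⟨i, hS⟩ := card_two_struct hdc hcard
  set m : Mu n := Finsupp.single i 1 with hm
  have hm0 : m ≠ 0 := by simp [hm, Finsupp.single_eq_zero]
  have hmS : m ∈ S := by rw [hS]; simp
  have hmi : m i = 1 := by simp [hm]
  -- improved step subset
  have hsub : gens S ⊆ (gens (S.erase m) \ {m}) ∪ {m + Finsupp.single i 1} := by
    rintro a ⟨haS, hgen⟩
    by_cases hT : ∃ j, a = m + Finsupp.single j 1
    · obtain ⟨j, rfl⟩ := hT
      rcases eq_or_ne j i with rfl | hji
      · exact Or.inr rfl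
      · exfalso
        have hai : 0 < (m + Finsupp.single j 1 : Mu n) i := by
          rw [Finsupp.add_apply, hmi]; omega
        have h1 := hgen i hai
        rw [hm, single_add_sub_single i j hji, hS] at h1
        simp only [Finset.mem_insert, Finset.mem_singleton] at h1
        rcases h1 with h | h
        · exact hji (by simpa [Finsupp.single_eq_zero] using h)
        · rw [hm] at h
          exact hji ((Finsupp.single_left_injective (one_ne_zero (α := ℕ))) h)
    · push_neg at hT
      refine Or.inl ⟨⟨?_, fun k hk => ?_⟩, ?_⟩
      · intro h; exact haS (Finset.mem_of_mem_erase h)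
      · rw [Finset.mem_erase]
        refine ⟨?_, hgen k hk⟩
        intro heq
        exact hT k (by rw [← sub_add_single a k hk, heq])
      · intro h
        rw [Set.mem_singleton_iff] at h
        exact haS (h ▸ hmS)
  have herase : S.erase m = {0} := by
    rw [hS]
    ext x
    simp only [Finset.mem_erase, Finset.mem_insert, Finset.mem_singleton]
    constructor
    · rintro ⟨hx1, hx2 | hx2⟩
      · exact hx2
      · exact absurd hx2 hx1
    · rintro rfl
      exact ⟨fun h => hm0 h.symm, Or.inl rfl⟩
  have hmg : m ∈ gens (S.erase m) := by
    rw [herase, gens_zero]; exact ⟨i, rfl⟩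
  have h4 := Set.ncard_diff_singleton_add_one hmg (gens_finite _)
  have h1 := Set.ncard_le_ncard hsub (((gens_finite _).diff).union (Set.finite_singleton _))
  have h2 := Set.ncard_union_le (gens (S.erase m) \ {m}) ({m + Finsupp.single i 1} : Set (Mu n))
  have h3 : ({m + Finsupp.single i 1} : Set (Mu n)).ncard = 1 := Set.ncard_singleton _
  have h5 : (gens (S.erase m)).ncard = n := by rw [herase, ncard_gens_zero (by omega)]
  omega

lemma bound_strict (hn : 2 ≤ n) : ∀ K, 2 ≤ K → ∀ S : Finset (Mu n), DC S → S.card = K →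
    (gens S).ncard + K ≤ n * K := by
  intro K
  induction K using Nat.strong_induction_on with
  | _ K ih =>
    intro hK S hdc hcard
    rcases eq_or_lt_of_le hK with h1 | h2
    · have := bound_two hn hdc (by omega)
      have : n * K = n * 2 := by rw [h1]
      have hn2 : n * 2 = n + n := by ring
      have := bound_two hn hdc (by omega)
      omega
    · obtain ⟨a, ha, b, hb, hab⟩ := Finset.one_lt_card.1 (by omega : 1 < S.card)
      have hex : ∃ s0 ∈ S, s0 ≠ (0 : Mu n) := by
        rcases eq_or_ne a 0 with rfl | h
        · exact ⟨b, hb, fun h => hab h.symm⟩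
        · exact ⟨a, ha, h⟩
      obtain ⟨s0, hs0, hs0ne⟩ := hex
      obtain ⟨m, hm, hm0, hmax⟩ := exists_maximal ⟨a, ha⟩ s0 hs0 hs0ne
      have hstep := ncard_step hdc hm hm0
      have hcard2 : (S.erase m).card = K - 1 := by
        rw [Finset.card_erase_of_mem hm, hcard]
      have hih := ih (K - 1) (by omega) (by omega) (S.erase m) (hdc.erase hmax) hcard2
      have hmul : n * (K - 1) + n = n * K := by
        have h3 : K - 1 + 1 = K := by omega
        calc n * (K - 1) + n = n * (K - 1 + 1) := by ring
          _ = n * K := by rw [h3]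
      omega

lemma gens_subsingleton (hn1 : n = 1) (hdc : DC S) : (gens S).Subsingleton := by
  subst hn1
  have key : ∀ x y : Mu 1, x ∈ gens S → y ∈ gens S → x 0 ≤ y 0 → x = y := by
    intro x y hx hy hxy
    rcases eq_or_lt_of_le hxy with h | h
    · refine Finsupp.ext fun i => ?_
      have hi : i = 0 := Subsingleton.elim i 0
      rw [hi]; exact h
    · exfalso
      have hy0 : 0 < y 0 := by omega
      have hmem := hy.2 0 hy0
      have hle : x ≤ y - Finsupp.single 0 1 := by
        rw [Finsupp.le_def]
        intro i
        have hi : i = 0 := Subsingleton.elim i 0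
        rw [hi, Finsupp.tsub_apply, Finsupp.single_apply, if_pos rfl]
        omega
      exact hx.1 (hdc hle hmem)
  intro a ha b hb
  rcases le_total (a 0) (b 0) with h | h
  · exact key a b ha hb h
  · exact (key b a hb ha h).symm

lemma gens_nonempty (hn : 1 ≤ n) (S : Finset (Mu n)) : (gens S).Nonempty := by
  classical
  haveI : Nonempty (Fin n) := Fin.pos_iff_nonempty.1 hn
  obtain ⟨i0⟩ := ‹Nonempty (Fin n)›
  haveI : Infinite (Mu n) := Infinite.of_injective
    (fun k : ℕ => Finsupp.single i0 k) (fun x y h => by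
      have := congrArg (fun f : Mu n => f i0) h
      simpa [Finsupp.single_apply] using this)
  obtain ⟨a0, ha0⟩ := S.exists_notMem
  have hset : ∃ d, ∃ a : Mu n, a ∉ S ∧ deg a = d := ⟨deg a0, a0, ha0, rfl⟩
  obtain ⟨a, haS, hdeg⟩ := Nat.find_spec hset
  refine ⟨a, haS, fun i hi => ?_⟩
  by_contra hmem
  have hlt : deg (a - Finsupp.single i 1) < Nat.find hset := by
    have h1 : deg (a - Finsupp.single i 1) + 1 = deg a := by
      conv_rhs => rw [← sub_add_single a i hi]
      rw [deg_add, deg_single]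
    omega
  exact Nat.find_min hset hlt ⟨a - Finsupp.single i 1, hmem, rfl⟩

lemma ncard_gens_one (hn1 : n = 1) (hdc : DC S) : (gens S).ncard = 1 := by
  obtain ⟨a, ha⟩ := gens_nonempty (by omega) S
  rw [(gens_subsingleton hn1 hdc).eq_singleton_of_mem ha, Set.ncard_singleton]

theorem comb (hn : 1 ≤ n) (K : ℕ) (hK : 1 ≤ K) (S : Finset (Mu n)) (hdc : DC S)
    (hcard : S.card = K) : (gens S).ncard = (n - 1) * K + 1 ↔ K = 1 ∨ n = 1 := by
  constructor
  · intro h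
    by_contra hcon
    push_neg at hcon
    have hK2 : 2 ≤ K := by omega
    have hn2 : 2 ≤ n := by omega
    have hb := bound_strict hn2 K hK2 S hdc hcard
    have hmul : (n - 1) * K + K = n * K := by
      have h1 : n - 1 + 1 = n := by omega
      calc (n - 1) * K + K = (n - 1 + 1) * K := by ring
        _ = n * K := by rw [h1]
    omega
  · rintro (rfl | hn1)
    · rw [eq_singleton_zero hdc hcard, ncard_gens_zero hn, mul_one]
      omega
    · rw [ncard_gens_one hn1 hdc, hn1]
      simp

end Statement7Aux

open MvPolynomial

/-- An ideal of `F[X_1,…,X_n]` is a *monomial ideal* if it is generated by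
a set of monomials `X^a = X_1^{a_1} ⋯ X_n^{a_n}`. -/
def IsMonomialIdeal {n : ℕ} {F : Type} [Field F] (I : Ideal (MvPolynomial (Fin n) F)) : Prop :=
  ∃ S : Set (Fin n →₀ ℕ), I = Ideal.span ((fun a => (monomial a (1 : F))) '' S)


/-- The minimal monomial generating set of a monomial ideal \`I\`, described by exponent
vectors: those \`a\` with \`X^a ∈ I\` such that \`X^a / X_i ∉ I\` for every \`i\` with \`a_i > 0\`. -/
def minGenSet {n : ℕ} {F : Type} [Field F] (I : Ideal (MvPolynomial (Fin n) F)) :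
    Set (Fin n →₀ ℕ) :=
  {a | (monomial a (1 : F)) ∈ I ∧
    ∀ i, 0 < a i → (monomial (a - Finsupp.single i 1) (1 : F)) ∉ I}

/-- If `I` is a nonzero monomial ideal with `dim F[X]/I = K ≥ 1`, its minimal monomial
generating set `G` satisfies `|G| = (n-1)K + 1` if and only if `K = 1` or `n = 1`. -/
theorem statement_7 (F : Type) [Field F] (n K : ℕ) (hn : 1 ≤ n) (hK : 1 ≤ K)
    (I : Ideal (MvPolynomial (Fin n) F)) (hI : IsMonomialIdeal I) (hne : I ≠ ⊥)
    (hdim : Module.finrank F (MvPolynomial (Fin n) F ⧸ I) = K) :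
    (minGenSet I).ncard = (n - 1) * K + 1 ↔ (K = 1 ∨ n = 1) := by
  classical
  obtain ⟨S₀, hspan⟩ := hI
  have hmem : ∀ p : MvPolynomial (Fin n) F, p ∈ I ↔ ∀ b ∈ p.support, ∃ s ∈ S₀, s ≤ b := by
    intro p; rw [hspan]; exact mem_ideal_span_monomial_image
  have hE : ∀ a : Fin n →₀ ℕ, (monomial a (1 : F)) ∈ I ↔ ∃ s ∈ S₀, s ≤ a := by
    intro a
    rw [hmem]
    simp [support_monomial]
  have hup : ∀ a b : Fin n →₀ ℕ, a ≤ b → (monomial a (1 : F)) ∈ I → (monomial b (1 : F)) ∈ I := by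
    intro a b hab ha
    rw [hE] at ha ⊢
    obtain ⟨s, hs, hsa⟩ := ha
    exact ⟨s, hs, hsa.trans hab⟩
  set B : Set (Fin n →₀ ℕ) := {a | (monomial a (1 : F)) ∉ I} with hBdef
  have hmemB : ∀ a : Fin n →₀ ℕ, a ∈ B ↔ (monomial a (1 : F)) ∉ I := fun a => Iff.rfl
  set q : MvPolynomial (Fin n) F →ₐ[F] (MvPolynomial (Fin n) F ⧸ I) := Ideal.Quotient.mkₐ F I
    with hqdef
  have hq0 : ∀ p : MvPolynomial (Fin n) F, q p = 0 ↔ p ∈ I := by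
    intro p
    rw [hqdef]
    rw [show (Ideal.Quotient.mkₐ F I) p = Ideal.Quotient.mk I p from congrFun
      (Ideal.Quotient.mkₐ_eq_mk F I) p]
    exact Ideal.Quotient.eq_zero_iff_mem
  set v : B → (MvPolynomial (Fin n) F ⧸ I) := fun a => q (monomial (a : Fin n →₀ ℕ) 1)
    with hvdef
  have hmono_smul : ∀ (a : Fin n →₀ ℕ) (c : F),
      monomial a c = c • monomial a (1 : F) := by
    intro a c
    rw [smul_monomial, smul_eq_mul, mul_one]
  have hli : LinearIndependent F v := by
    rw [linearIndependent_iff]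
    intro l hl
    set p : MvPolynomial (Fin n) F := l.sum (fun a c => monomial (a : Fin n →₀ ℕ) c) with hp
    have hqp : q p = Finsupp.linearCombination F v l := by
      rw [hp, Finsupp.linearCombination_apply, map_finsuppSum]
      refine Finsupp.sum_congr fun a _ => ?_
      rw [hmono_smul, map_smul]
    have hpI : p ∈ I := by
      rw [← hq0, hqp, hl]
    ext a
    rw [Finsupp.coe_zero, Pi.zero_apply]
    by_contra hla
    have hcoeff : p.coeff (a : Fin n →₀ ℕ) = l a := by
      rw [hp, Finsupp.sum, coeff_sum]
      rw [Finset.sum_eq_single a]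
      · rw [coeff_monomial, if_pos rfl]
      · intro b _ hba
        rw [coeff_monomial, if_neg (fun h => hba (Subtype.ext h))]
      · intro ha
        rw [coeff_monomial, if_pos rfl, Finsupp.notMem_support_iff.1 ha]
    have hsupp : (a : Fin n →₀ ℕ) ∈ p.support := by
      rw [mem_support_iff, hcoeff]; exact hla
    obtain ⟨s, hs, hsa⟩ := (hmem p).1 hpI _ hsupp
    exact a.2 ((hE _).2 ⟨s, hs, hsa⟩)
  have hsp : ⊤ ≤ Submodule.span F (Set.range v) := by
    rintro x -
    obtain ⟨p, rfl⟩ := Ideal.Quotient.mkₐ_surjective F I x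
    rw [show (Ideal.Quotient.mkₐ F I) p = q p from rfl]
    rw [p.as_sum, map_sum]
    refine Submodule.sum_mem _ fun a _ => ?_
    rw [hmono_smul, map_smul]
    by_cases haB : a ∈ B
    · exact Submodule.smul_mem _ _ (Submodule.subset_span ⟨⟨a, haB⟩, rfl⟩)
    · have h0 : q (monomial a (1 : F)) = 0 := (hq0 _).2 (not_not.1 haB)
      rw [h0, smul_zero]
      exact Submodule.zero_mem _
  let bas : Module.Basis B F (MvPolynomial (Fin n) F ⧸ I) := Module.Basis.mk hli hsp
  have hBfin : B.Finite := by
    rw [← Set.not_infinite]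
    intro hinf
    haveI := hinf.to_subtype
    have h1 : Cardinal.aleph0 ≤ Module.rank F (MvPolynomial (Fin n) F ⧸ I) := by
      rw [← Module.Basis.mk_eq_rank'' bas]
      exact Cardinal.infinite_iff.1 inferInstance
    have h2 : Module.finrank F (MvPolynomial (Fin n) F ⧸ I) = 0 :=
      Cardinal.toNat_apply_of_aleph0_le h1
    omega
  haveI : Fintype B := hBfin.fintype
  have hcardB : B.ncard = K := by
    rw [← hdim, Module.finrank_eq_card_basis bas, Set.ncard_eq_toFinset_card', Set.toFinset_card]
  set SF : Finset (Fin n →₀ ℕ) := B.toFinset with hSF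
  have hcardSF : SF.card = K := by
    rw [hSF, ← Set.ncard_eq_toFinset_card', hcardB]
  have hdc : Statement7Aux.DC SF := by
    intro a b hab hb
    rw [hSF, Set.mem_toFinset] at hb ⊢
    exact fun ha => hb (hup a b hab ha)
  have hgens : minGenSet I = Statement7Aux.gens SF := by
    ext a
    constructor
    · rintro ⟨h1, h2⟩
      refine ⟨?_, fun i hi => ?_⟩
      · rw [hSF, Set.mem_toFinset]
        exact fun hmm => hmm h1
      · rw [hSF, Set.mem_toFinset]
        exact h2 i hi
    · rintro ⟨h1, h2⟩
      rw [hSF, Set.mem_toFinset, hmemB, not_not] at h1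
      refine ⟨h1, fun i hi => ?_⟩
      have := h2 i hi
      rw [hSF, Set.mem_toFinset, hmemB] at this
      exact this
  rw [hgens]
  exact Statement7Aux.comb hn K hK SF hdc hcardSF
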